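/- Let Y be an m×n zero-nonzero pattern and let G be a finite simple graph with a partition (V_1, V_2) according to Y. Let k be the smallest size of a zero forcing set F for G that forces from V_1 to V_2 (such a set always exists, e.g. F = V(G)). Then tri(Y) = m + n − k. -/

import Mathlib

/-!  Common definitions: zero forcing (standard, loop, positive semidefinite),
zero-nonzero patterns, triangles, and related graph parameters. -/

variable {V : Type*}

/-- Standard zero forcing rule: with filled set `S`, the filled vertex `v` can force
its unique unfilled neighbor `u`. -/
def StdForce (G : SimpleGraph V) (S : Set V) (v u : V) : Prop :=
  v ∈ S ∧ u ∉ S ∧ G.Adj v u ∧ ∀ w, G.Adj v w → w ∉ S → w = u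

/-- Adjacency in the looping of `G` with loops at the vertices in `L`
(a vertex counts as its own neighbor iff it has a loop). -/
def LoopAdj (G : SimpleGraph V) (L : Set V) (v w : V) : Prop :=
  G.Adj v w ∨ (v = w ∧ v ∈ L)

/-- Loop zero forcing rule (the forcing vertex need not be filled): `v` can force `u`
if `u` is the only unfilled neighbor of `v` in the looping. -/
def LoopForce (G : SimpleGraph V) (L : Set V) (S : Set V) (v u : V) : Prop :=
  u ∉ S ∧ LoopAdj G L v u ∧ ∀ w, LoopAdj G L v w → w ∉ S → w = u

/-- Positive semidefinite zero forcing rule: the filled vertex `v` can force the unfilled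
vertex `u` if `u` is the only neighbor of `v` in the connected component of `u` of the
subgraph induced by the unfilled vertices. -/
def PsdForce (G : SimpleGraph V) (S : Set V) (v u : V) : Prop :=
  v ∈ S ∧ u ∉ S ∧ G.Adj v u ∧
    ∀ w, G.Adj v w → w ∉ S →
      Relation.ReflTransGen (fun a b => G.Adj a b ∧ a ∉ S ∧ b ∉ S) u w → w = u

/-- The vertices performing a force in a forcing sequence. -/
def sourcesOf (seq : List (V × V)) : Set V := {v | ∃ p ∈ seq, p.1 = v}

/-- The vertices that get forced in a forcing sequence. -/
def targetsOf (seq : List (V × V)) : Set V := {u | ∃ p ∈ seq, p.2 = u}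

/-- The filled set after performing all forces of `seq` starting from `F`. -/
def filledAfter (F : Set V) (seq : List (V × V)) : Set V := F ∪ targetsOf seq

/-- `ValidSeq rule seq F`: starting with `F` as the filled set, the sequence of forces
`seq` is permitted (each force in turn is allowed by `rule`, and each vertex forces
at most once). -/
def ValidSeq (rule : Set V → V → V → Prop) : List (V × V) → Set V → Prop
  | [], _ => True
  | (v, u) :: rest, F => rule F v u ∧ (∀ p ∈ rest, p.1 ≠ v) ∧ ValidSeq rule rest (insert u F)

/-- `F` is a zero forcing set w.r.t. the forcing rule `rule`. -/
def IsZFSet (rule : Set V → V → V → Prop) (F : Set V) : Prop :=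
  ∃ seq : List (V × V), ValidSeq rule seq F ∧ filledAfter F seq = Set.univ

/-- `F` is a zero forcing set (w.r.t. `rule`) from which `R` can be the set of vertices
that force: some (automatically complete) forcing sequence from `F` fills every vertex
and the set of vertices performing a force is exactly `R`. -/
def ForcesWith (rule : Set V → V → V → Prop) (F R : Set V) : Prop :=
  ∃ seq : List (V × V), ValidSeq rule seq F ∧ filledAfter F seq = Set.univ ∧
    sourcesOf seq = R

/-- The zero forcing number w.r.t. a forcing rule. -/
noncomputable def Znum (rule : Set V → V → V → Prop) : ℕ :=
  sInf {n | ∃ F : Set V, IsZFSet rule F ∧ F.ncard = n}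

/-- The (standard) zero forcing number `Z(G)`. -/
noncomputable def Z (G : SimpleGraph V) : ℕ := Znum (StdForce G)

/-- The zero forcing number of the looping of `G` with loops at `L`. -/
noncomputable def Zloop (G : SimpleGraph V) (L : Set V) : ℕ := Znum (LoopForce G L)

/-- The positive semidefinite zero forcing number `Z₊(G)`. -/
noncomputable def Zplus (G : SimpleGraph V) : ℕ := Znum (PsdForce G)

/-- The enhanced zero forcing number `Ẑ(G)`: the maximum over all loopings of `G` of the
zero forcing number of the looping. -/
noncomputable def Zhat (G : SimpleGraph V) : ℕ := sSup {n | ∃ L : Set V, Zloop G L = n}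

/-- `F` is a direct zero forcing set for `G`: some forcing sequence from `F` fills every
vertex and every vertex that performs a force belongs to `F`. -/
def IsDirectZFSet (G : SimpleGraph V) (F : Set V) : Prop :=
  ∃ seq : List (V × V), ValidSeq (StdForce G) seq F ∧ filledAfter F seq = Set.univ ∧
    sourcesOf seq ⊆ F

/-- The direct zero forcing number `Z_d(G)`. -/
noncomputable def Zd (G : SimpleGraph V) : ℕ :=
  sInf {n | ∃ F : Set V, IsDirectZFSet G F ∧ F.ncard = n}

/-- A zero-nonzero pattern `Y` (entry `Y i j` means the `(i,j)` entry is `*`)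
has a `k × k` submatrix that is a triangle. -/
def HasTriOfSize {ρ γ : Type*} (Y : ρ → γ → Prop) (k : ℕ) : Prop :=
  ∃ (r : Fin k → ρ) (c : Fin k → γ), Function.Injective r ∧ Function.Injective c ∧
    (∀ i, Y (r i) (c i)) ∧ ∀ i j : Fin k, i < j → ¬ Y (r i) (c j)

/-- The triangle number `tri(Y)` of a zero-nonzero pattern. -/
noncomputable def tri {ρ γ : Type*} (Y : ρ → γ → Prop) : ℕ := sSup {k | HasTriOfSize Y k}

/-- Membership in `S_znz(G)`: off the diagonal, the pattern matches the adjacency of `G`. -/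
def InSznz (G : SimpleGraph V) (A : V → V → Prop) : Prop :=
  ∀ i j : V, i ≠ j → (A i j ↔ G.Adj i j)

/-- The zero-nonzero pattern of the looping of `G` with loops at `L`. -/
def loopPattern (G : SimpleGraph V) (L : Set V) : V → V → Prop :=
  fun i j => (i = j ∧ i ∈ L) ∨ (i ≠ j ∧ G.Adj i j)

/-- The submatrix of the pattern `Y` with rows `R` and columns `C` is a triangle:
there are enumerations of `R` and `C` realizing a lower-triangular pattern with `*`
diagonal (in particular `|R| = |C|`). -/
def SubIsTriangle {ρ γ : Type*} (Y : ρ → γ → Prop) (R : Finset ρ) (C : Finset γ) : Prop :=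
  ∃ (k : ℕ) (r : Fin k → ρ) (c : Fin k → γ),
    Function.Injective r ∧ Function.Injective c ∧
    (∀ x : ρ, x ∈ R ↔ ∃ i, r i = x) ∧ (∀ y : γ, y ∈ C ↔ ∃ i, c i = y) ∧
    (∀ i, Y (r i) (c i)) ∧ ∀ i j : Fin k, i < j → ¬ Y (r i) (c j)

/-- `(R, C)` is a persistent triangle of `G`. -/
def PersistentTriangle (G : SimpleGraph V) (R C : Finset V) : Prop :=
  ∀ A : V → V → Prop, InSznz G A → SubIsTriangle A R C

/-- `F` is a direct zero forcing set for `G` from which `R` can be the set of vertices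
that force. -/
def DirectForcesWith (G : SimpleGraph V) (F R : Set V) : Prop :=
  ∃ seq : List (V × V), ValidSeq (StdForce G) seq F ∧ filledAfter F seq = Set.univ ∧
    sourcesOf seq = R ∧ R ⊆ F

/-- `(range r, range c)` is a partition of `G` according to the `m × n` pattern `Y`,
with labelings given by `r` and `c`. -/
def PartitionAccording (G : SimpleGraph V) {m n : ℕ} (Y : Fin m → Fin n → Prop)
    (r : Fin m → V) (c : Fin n → V) : Prop :=
  Function.Injective r ∧ Function.Injective c ∧ (∀ i j, r i ≠ c j) ∧
    (∀ v : V, (∃ i, r i = v) ∨ (∃ j, c j = v)) ∧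
    ∀ i j, G.Adj (r i) (c j) ↔ Y i j

/-- `F` is a zero forcing set for `G` that forces from `V1` to `V2`. -/
def ForcesFromTo (G : SimpleGraph V) (F V1 V2 : Set V) : Prop :=
  V1 ⊆ F ∧ ∃ seq : List (V × V), ValidSeq (StdForce G) seq F ∧
    filledAfter F seq = Set.univ ∧ sourcesOf seq ⊆ V1 ∧ targetsOf seq ⊆ V2

/-- `(V1, V2)` is a partition of the vertex set of `G` into two cliques. -/
def IsCliquePartition (G : SimpleGraph V) (V1 V2 : Set V) : Prop :=
  Disjoint V1 V2 ∧ V1 ∪ V2 = Set.univ ∧ G.IsClique V1 ∧ G.IsClique V2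

/-- `G` is cobipartite. -/
def Cobipartite (G : SimpleGraph V) : Prop := ∃ V1 V2 : Set V, IsCliquePartition G V1 V2

/-- `G` is the cobipartite graph associated with the pattern `Y`, via labelings `r`, `c`. -/
def CobipAssociated (G : SimpleGraph V) {m n : ℕ} (Y : Fin m → Fin n → Prop)
    (r : Fin m → V) (c : Fin n → V) : Prop :=
  PartitionAccording G Y r c ∧ G.IsClique (Set.range r) ∧ G.IsClique (Set.range c)

/-- `z` is a critical vertex: some optimal forcing sequence neither lets `z` force
nor forces `z`. -/
def Critical (G : SimpleGraph V) (z : V) : Prop :=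
  ∃ (F : Set V) (seq : List (V × V)), F.ncard = Z G ∧ ValidSeq (StdForce G) seq F ∧
    filledAfter F seq = Set.univ ∧ z ∉ sourcesOf seq ∧ z ∉ targetsOf seq

/-- `z` is an uncritical vertex: in every optimal forcing sequence, exactly one of the
following holds: `z` performs a force, or `z` gets forced. -/
def Uncritical (G : SimpleGraph V) (z : V) : Prop :=
  ∀ (F : Set V) (seq : List (V × V)), F.ncard = Z G → ValidSeq (StdForce G) seq F →
    filledAfter F seq = Set.univ → (z ∈ sourcesOf seq ↔ z ∉ targetsOf seq)

/-- The maximum nullity `M(G)` over the field `𝔽`. -/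
noncomputable def Mnum (𝔽 : Type*) [Field 𝔽] [Fintype V] [DecidableEq V]
    (G : SimpleGraph V) : ℕ :=
  sSup {k | ∃ A : Matrix V V 𝔽, A.IsSymm ∧ (∀ i j : V, i ≠ j → (A i j ≠ 0 ↔ G.Adj i j)) ∧
    k = Fintype.card V - A.rank}

/-- The minimum rank `mr_𝔽(Y)` of a zero-nonzero pattern over the field `𝔽`. -/
noncomputable def mr (𝔽 : Type*) [Field 𝔽] {m n : ℕ} (Y : Fin m → Fin n → Prop) : ℕ :=
  sInf {k | ∃ A : Matrix (Fin m) (Fin n) 𝔽, (∀ i j, A i j ≠ 0 ↔ Y i j) ∧ A.rank = k}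

/-- `G` is a `k`-tree: there is a construction ordering of the vertices in which the
first `k+1` vertices form a clique and every later vertex is adjacent among the earlier
vertices to exactly a `k`-clique. -/
def IsKTree (k : ℕ) [Fintype V] (G : SimpleGraph V) : Prop :=
  k + 1 ≤ Fintype.card V ∧ ∃ ord : V ≃ Fin (Fintype.card V),
    (∀ u v : V, (ord u : ℕ) < k + 1 → (ord v : ℕ) < k + 1 → u ≠ v → G.Adj u v) ∧
    ∀ v : V, k + 1 ≤ (ord v : ℕ) →
      G.IsClique {u : V | (ord u : ℕ) < (ord v : ℕ) ∧ G.Adj u v} ∧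
      {u : V | (ord u : ℕ) < (ord v : ℕ) ∧ G.Adj u v}.ncard = k


section Aux
variable {V : Type*}

lemma targetsOf_nil' : targetsOf ([] : List (V × V)) = ∅ := by
  ext u; simp [targetsOf]

lemma targetsOf_cons' (p : V × V) (l : List (V × V)) :
    targetsOf (p :: l) = insert p.2 (targetsOf l) := by
  ext u
  simp only [targetsOf, Set.mem_setOf_eq, List.mem_cons, Set.mem_insert_iff]
  constructor
  · rintro ⟨q, hq | hq, rfl⟩
    · left; rw [hq]
    · right; exact ⟨q, hq, rfl⟩
  · rintro (h | ⟨q, hq, rfl⟩)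
    · exact ⟨p, Or.inl rfl, h.symm⟩
    · exact ⟨q, Or.inr hq, rfl⟩

lemma filledAfter_nil' (F : Set V) : filledAfter F [] = F := by
  simp [filledAfter, targetsOf_nil']

lemma filledAfter_cons' (F : Set V) (p : V × V) (l : List (V × V)) :
    filledAfter F (p :: l) = filledAfter (insert p.2 F) l := by
  simp only [filledAfter, targetsOf_cons']
  ext w; simp only [Set.mem_union, Set.mem_insert_iff]; tauto

lemma validSeq_getElem {rule : Set V → V → V → Prop} :
    ∀ (seq : List (V × V)) (F : Set V), ValidSeq rule seq F →
      (∀ i (hi : i < seq.length),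
        rule (filledAfter F (seq.take i)) (seq[i]'hi).1 (seq[i]'hi).2) ∧
      seq.Pairwise (fun p q => p.1 ≠ q.1)
  | [], _, _ => ⟨fun i hi => by simp at hi, List.Pairwise.nil⟩
  | (v, u) :: rest, F, h => by
    obtain ⟨h0, hne, hrest⟩ := h
    obtain ⟨ih1, ih2⟩ := validSeq_getElem rest (insert u F) hrest
    constructor
    · intro i hi
      match i with
      | 0 => simpa [filledAfter_nil'] using h0
      | Nat.succ i =>
        have := ih1 i (by simpa using hi)
        simpa [filledAfter_cons'] using this
    · exact List.Pairwise.cons (fun q hq => (hne q hq).symm) ih2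

lemma validSeq_of_getElem {rule : Set V → V → V → Prop} :
    ∀ (seq : List (V × V)) (F : Set V),
      seq.Pairwise (fun p q => p.1 ≠ q.1) →
      (∀ i (hi : i < seq.length),
        rule (filledAfter F (seq.take i)) (seq[i]'hi).1 (seq[i]'hi).2) →
      ValidSeq rule seq F
  | [], _, _, _ => trivial
  | (v, u) :: rest, F, hpw, h => by
    refine ⟨by
      have h0 := h 0 (by simp)
      rw [List.getElem_cons_zero] at h0
      simpa [filledAfter_nil'] using h0, ?_, ?_⟩
    · intro p hp; exact ((List.pairwise_cons.mp hpw).1 p hp).symm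
    · exact validSeq_of_getElem rest (insert u F) (List.pairwise_cons.mp hpw).2
        (fun i hi => by
          have h1 := h (i+1) (by simpa using hi)
          rw [List.getElem_cons_succ] at h1
          simpa [filledAfter_cons'] using h1)

lemma ncard_range_fin {α : Type*} {t : ℕ} {f : Fin t → α} (hf : Function.Injective f) :
    (Set.range f).ncard = t := by
  rw [← Set.image_univ, Set.ncard_image_of_injective _ hf, Set.ncard_univ,
    Nat.card_eq_fintype_card, Fintype.card_fin]

lemma forcesFromTo_of_tri {V : Type*} [Fintype V] [DecidableEq V] {m n : ℕ}
    {Y : Fin m → Fin n → Prop} {G : SimpleGraph V} {r : Fin m → V} {c : Fin n → V}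
    (hpart : PartitionAccording G Y r c) {t : ℕ} (ht : HasTriOfSize Y t) :
    ∃ F : Set V, ForcesFromTo G F (Set.range r) (Set.range c) ∧
      F.ncard + t = Fintype.card V := by
  obtain ⟨ρ, γ, hρ, hγ, hdiag, hoff⟩ := ht
  obtain ⟨hrinj, hcinj, hrc, hcover, hadj⟩ := hpart
  set g : Fin t → V := fun i => c (γ i) with hg
  have hginj : Function.Injective g := hcinj.comp hγ
  set T : Set V := Set.range g with hT
  set F : Set V := Tᶜ with hF
  set seq : List (V × V) := List.ofFn (fun i : Fin t => (r (ρ i), g i)) with hseq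
  have hlen : seq.length = t := by simp [hseq]
  have hget : ∀ (i : ℕ) (hi : i < seq.length),
      seq[i] = (r (ρ ⟨i, hlen ▸ hi⟩), g ⟨i, hlen ▸ hi⟩) := by
    intro i hi
    simp [hseq]
  have hrF : ∀ i : Fin m, r i ∈ F := by
    intro i
    simp only [hF, hT, Set.mem_compl_iff, Set.mem_range, not_exists]
    intro l hl
    exact hrc i (γ l) hl.symm
  have htake : ∀ (i : ℕ) (u : V),
      u ∈ targetsOf (seq.take i) ↔ ∃ l : Fin t, (l : ℕ) < i ∧ g l = u := by
    intro i u
    simp only [targetsOf, Set.mem_setOf_eq]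
    constructor
    · rintro ⟨p, hp, rfl⟩
      rw [List.mem_iff_getElem] at hp
      obtain ⟨l, hl, hpl⟩ := hp
      have hl' : l < seq.length := by
        have := hl; rw [List.length_take] at this; omega
      have hli : l < i := by
        have := hl; rw [List.length_take] at this; omega
      refine ⟨⟨l, hlen ▸ hl'⟩, hli, ?_⟩
      rw [← hpl, List.getElem_take, hget l hl']
    · rintro ⟨l, hli, rfl⟩
      have hl' : (l : ℕ) < seq.length := by have := l.2; omega
      have hl'' : (l : ℕ) < (seq.take i).length := by
        rw [List.length_take]; omega
      refine ⟨(seq.take i)[(l : ℕ)], List.getElem_mem _, ?_⟩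
      rw [List.getElem_take, hget l hl']
  have hfilled : ∀ (i : ℕ) (w : V),
      w ∈ filledAfter F (seq.take i) ↔ w ∈ F ∨ ∃ l : Fin t, (l : ℕ) < i ∧ g l = w := by
    intro i w
    simp only [filledAfter, Set.mem_union, htake]
  refine ⟨F, ⟨?_, seq, ?_, ?_, ?_, ?_⟩, ?_⟩
  · rintro v ⟨i, rfl⟩; exact hrF i
  · -- ValidSeq
    apply validSeq_of_getElem
    · rw [List.pairwise_iff_getElem]
      intro i j hi hj hij
      rw [hget i hi, hget j hj]
      simp only [ne_eq]
      intro hcon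
      have := hρ (hrinj hcon)
      simp only [Fin.mk.injEq] at this
      omega
    · intro i hi
      rw [hget i hi]
      have hit : i < t := hlen ▸ hi
      refine ⟨?_, ?_, ?_, ?_⟩
      · rw [hfilled]; exact Or.inl (hrF _)
      · rw [hfilled]
        rintro (hmem | ⟨l, hl, hlg⟩)
        · exact hmem ⟨⟨i, hit⟩, rfl⟩
        · have := hγ (hcinj hlg)
          have hval : (l : ℕ) = i := congrArg Fin.val this
          omega
      · exact (hadj _ _).mpr (hdiag ⟨i, hit⟩)
      · intro w hw hwmem
        rw [hfilled] at hwmem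
        have hw1 : ¬ w ∈ F := fun h => hwmem (Or.inl h)
        have hw2 : ∀ l : Fin t, (l : ℕ) < i → g l ≠ w :=
          fun l hl hlg => hwmem (Or.inr ⟨l, hl, hlg⟩)
        simp only [hF, hT, Set.mem_compl_iff, Set.mem_range, not_not] at hw1
        obtain ⟨l, rfl⟩ := hw1
        have hli : ¬ ((l : ℕ) < i) := fun h => hw2 l h rfl
        have hle : i ≤ (l : ℕ) := by omega
        rcases eq_or_lt_of_le hle with heq | hlt
        · congr 1
          exact Fin.ext heq.symm
        · exfalso
          have hi'l : (⟨i, hit⟩ : Fin t) < l := hlt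
          exact hoff ⟨i, hit⟩ l hi'l ((hadj _ _).mp hw)
  · -- filledAfter F seq = univ
    have : targetsOf seq = T := by
      ext u
      simp only [targetsOf, Set.mem_setOf_eq, hT, Set.mem_range]
      constructor
      · rintro ⟨p, hp, rfl⟩
        rw [hseq, List.mem_ofFn] at hp
        obtain ⟨l, rfl⟩ := hp
        exact ⟨l, rfl⟩
      · rintro ⟨l, rfl⟩
        refine ⟨(r (ρ l), g l), ?_, rfl⟩
        rw [hseq, List.mem_ofFn]
        exact ⟨l, rfl⟩
    rw [filledAfter, this, hF]
    exact Set.compl_union_self T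
  · -- sources ⊆ range r
    rintro v ⟨p, hp, rfl⟩
    rw [hseq, List.mem_ofFn] at hp
    obtain ⟨l, rfl⟩ := hp
    exact ⟨ρ l, rfl⟩
  · -- targets ⊆ range c
    rintro u ⟨p, hp, rfl⟩
    rw [hseq, List.mem_ofFn] at hp
    obtain ⟨l, rfl⟩ := hp
    exact ⟨γ l, rfl⟩
  · -- cardinality
    have h1 : T.ncard = t := ncard_range_fin hginj
    have h2 := Set.ncard_add_ncard_compl T
    rw [h1, ← hF] at h2
    rw [Nat.card_eq_fintype_card] at h2
    omega

lemma tri_of_forcesFromTo {V : Type*} [Fintype V] [DecidableEq V] {m n : ℕ}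
    {Y : Fin m → Fin n → Prop} {G : SimpleGraph V} {r : Fin m → V} {c : Fin n → V}
    (hpart : PartitionAccording G Y r c) {F : Set V}
    (hF : ForcesFromTo G F (Set.range r) (Set.range c)) :
    ∃ t : ℕ, HasTriOfSize Y t ∧ F.ncard + t = Fintype.card V := by
  obtain ⟨hrinj, hcinj, hrc, hcover, hadj⟩ := hpart
  obtain ⟨hV1F, seq, hvalid, hfillall, hsrc, htgt⟩ := hF
  obtain ⟨hrule, hpw⟩ := validSeq_getElem seq F hvalid
  set t := seq.length with hlen
  set ufun : Fin t → V := fun i => (seq[(i : ℕ)]'i.2).2 with hufun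
  set vfun : Fin t → V := fun i => (seq[(i : ℕ)]'i.2).1 with hvfun
  have hmem_tgt_take : ∀ (i l : Fin t), (l : ℕ) < (i : ℕ) →
      ufun l ∈ targetsOf (seq.take (i : ℕ)) := by
    intro i l hli
    have hl' : (l : ℕ) < (seq.take (i : ℕ)).length := by
      rw [List.length_take]; omega
    refine ⟨(seq.take (i : ℕ))[(l : ℕ)], List.getElem_mem _, ?_⟩
    rw [List.getElem_take]
  have hu_not : ∀ i : Fin t, ufun i ∉ filledAfter F (seq.take (i : ℕ)) :=
    fun i => (hrule (i : ℕ) i.2).2.1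
  have huF : ∀ i : Fin t, ufun i ∉ F := by
    intro i hmem
    exact hu_not i (Set.mem_union_left _ hmem)
  have hu_ne : ∀ i j : Fin t, (i : ℕ) < (j : ℕ) → ufun i ≠ ufun j := by
    intro i j hij heq
    apply hu_not j
    rw [← heq] at *
    exact Set.mem_union_right _ (hmem_tgt_take j i hij)
  have huinj : Function.Injective ufun := by
    intro i j heq
    by_contra hne
    rcases lt_or_gt_of_ne (fun h : (i : ℕ) = (j : ℕ) => hne (Fin.ext h)) with h | h
    · exact hu_ne i j h heq
    · exact hu_ne j i h heq.symm
  have hvinj : Function.Injective vfun := by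
    intro i j heq
    by_contra hne
    rw [List.pairwise_iff_getElem] at hpw
    rcases lt_or_gt_of_ne (fun h : (i : ℕ) = (j : ℕ) => hne (Fin.ext h)) with h | h
    · exact hpw (i : ℕ) (j : ℕ) i.2 j.2 h heq
    · exact hpw (j : ℕ) (i : ℕ) j.2 i.2 h heq.symm
  have hadji : ∀ i : Fin t, G.Adj (vfun i) (ufun i) :=
    fun i => (hrule (i : ℕ) i.2).2.2.1
  have hsrcR : ∀ i : Fin t, ∃ x, r x = vfun i := by
    intro i
    exact hsrc ⟨seq[(i : ℕ)]'i.2, List.getElem_mem _, rfl⟩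
  have htgtC : ∀ i : Fin t, ∃ x, c x = ufun i := by
    intro i
    exact htgt ⟨seq[(i : ℕ)]'i.2, List.getElem_mem _, rfl⟩
  set ρ : Fin t → Fin m := fun i => (hsrcR i).choose with hρdef
  have hρspec : ∀ i, r (ρ i) = vfun i := fun i => (hsrcR i).choose_spec
  set γ : Fin t → Fin n := fun i => (htgtC i).choose with hγdef
  have hγspec : ∀ i, c (γ i) = ufun i := fun i => (htgtC i).choose_spec
  have hu_not_take : ∀ (i j : Fin t), (i : ℕ) < (j : ℕ) →
      ufun j ∉ filledAfter F (seq.take (i : ℕ)) := by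
    intro i j hij hmem
    rcases hmem with hmem | hmem
    · exact huF j hmem
    · obtain ⟨p, hp, hpu⟩ := hmem
      rw [List.mem_iff_getElem] at hp
      obtain ⟨l, hl, rfl⟩ := hp
      have hl1 : l < (i : ℕ) := by
        have := hl; rw [List.length_take] at this; omega
      have hl2 : l < t := by omega
      apply hu_not j
      apply Set.mem_union_right
      rw [← hpu, List.getElem_take]
      exact hmem_tgt_take j ⟨l, hl2⟩ (show l < (j : ℕ) by omega)
  refine ⟨t, ⟨ρ, γ, ?_, ?_, ?_, ?_⟩, ?_⟩
  · intro i j heq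
    exact hvinj (by rw [← hρspec i, ← hρspec j, heq])
  · intro i j heq
    exact huinj (by rw [← hγspec i, ← hγspec j, heq])
  · intro i
    rw [← hadj]
    rw [hρspec, hγspec]
    exact hadji i
  · intro i j hij hY
    have hadjij : G.Adj (vfun i) (ufun j) := by
      rw [← hρspec i, ← hγspec j]
      exact (hadj _ _).mpr hY
    have := (hrule (i : ℕ) i.2).2.2.2 (ufun j) hadjij (hu_not_take i j hij)
    exact hu_ne i j hij this.symm
  · -- cardinality
    have htgteq : targetsOf seq = Set.range ufun := by
      ext u
      simp only [targetsOf, Set.mem_setOf_eq, Set.mem_range]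
      constructor
      · rintro ⟨p, hp, rfl⟩
        rw [List.mem_iff_getElem] at hp
        obtain ⟨l, hl, rfl⟩ := hp
        exact ⟨⟨l, hl⟩, rfl⟩
      · rintro ⟨i, rfl⟩
        exact ⟨seq[(i : ℕ)]'i.2, List.getElem_mem _, rfl⟩
    have hFeq : F = (Set.range ufun)ᶜ := by
      ext w
      simp only [Set.mem_compl_iff, Set.mem_range]
      constructor
      · rintro hw ⟨i, rfl⟩
        exact huF i hw
      · intro hw
        have : w ∈ filledAfter F seq := by rw [hfillall]; trivial
        rcases this with h | h
        · exact h
        · rw [htgteq] at h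
          exact absurd h hw
    have h1 : (Set.range ufun).ncard = t := ncard_range_fin huinj
    have h2 := Set.ncard_add_ncard_compl (Set.range ufun)
    rw [h1, ← hFeq, Nat.card_eq_fintype_card] at h2
    omega

lemma card_eq_of_partition {V : Type*} [Fintype V] [DecidableEq V] {m n : ℕ}
    {Y : Fin m → Fin n → Prop} {G : SimpleGraph V} {r : Fin m → V} {c : Fin n → V}
    (hpart : PartitionAccording G Y r c) : Fintype.card V = m + n := by
  obtain ⟨hrinj, hcinj, hrc, hcover, hadj⟩ := hpart
  have hdisj : Disjoint (Set.range r) (Set.range c) := by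
    rw [Set.disjoint_left]
    rintro v ⟨i, rfl⟩ ⟨j, hj⟩
    exact hrc i j hj.symm
  have hcov : Set.range r ∪ Set.range c = Set.univ := by
    ext v
    simp only [Set.mem_union, Set.mem_univ, iff_true]
    exact hcover v
  have := Set.ncard_union_eq hdisj (Set.toFinite _) (Set.toFinite _)
  rw [hcov, Set.ncard_univ, Nat.card_eq_fintype_card, ncard_range_fin hrinj,
    ncard_range_fin hcinj] at this
  exact this

end Aux

/-- If `(V₁, V₂)` is a partition of `G` according to the `m × n`
pattern `Y` and `k` is the smallest size of a zero forcing set for `G` that forces from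
`V₁` to `V₂`, then `tri(Y) = m + n − k`. -/


theorem tri_eq_of_partition_according
    {V : Type*} [Fintype V] [DecidableEq V] {m n : ℕ} (Y : Fin m → Fin n → Prop)
    (G : SimpleGraph V) (r : Fin m → V) (c : Fin n → V)
    (hpart : PartitionAccording G Y r c) :
    tri Y = m + n -
      sInf {k | ∃ F : Set V,
        ForcesFromTo G F (Set.range r) (Set.range c) ∧ F.ncard = k} := by
  have hcard : Fintype.card V = m + n := card_eq_of_partition hpart
  have hubm : ∀ k ∈ {k | HasTriOfSize Y k}, k ≤ m := by
    rintro k ⟨ρ, γ, hρ, hγ, -, -⟩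
    simpa using Fintype.card_le_of_injective ρ hρ
  have hbdd : BddAbove {k | HasTriOfSize Y k} := ⟨m, hubm⟩
  have h0 : HasTriOfSize Y 0 :=
    ⟨Fin.elim0, Fin.elim0, fun i => i.elim0, fun i => i.elim0,
      fun i => i.elim0, fun i => i.elim0⟩
  have hne : {k | HasTriOfSize Y k}.Nonempty := ⟨0, h0⟩
  have hTmem : HasTriOfSize Y (tri Y) := Nat.sSup_mem hne hbdd
  have hTle : tri Y ≤ m := hubm _ hTmem
  obtain ⟨F₀, hF₀, hF₀card⟩ := forcesFromTo_of_tri hpart hTmem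
  set S := {k | ∃ F : Set V,
      ForcesFromTo G F (Set.range r) (Set.range c) ∧ F.ncard = k} with hS
  have hmemS : F₀.ncard ∈ S := ⟨F₀, hF₀, rfl⟩
  have hub : sInf S ≤ m + n - tri Y := by
    have : F₀.ncard = m + n - tri Y := by omega
    exact this ▸ Nat.sInf_le hmemS
  have hlb : m + n - tri Y ≤ sInf S := by
    apply le_csInf ⟨_, hmemS⟩
    rintro k ⟨F, hF, rfl⟩
    obtain ⟨t, ht, hcard'⟩ := tri_of_forcesFromTo hpart hF
    have htle : t ≤ tri Y := le_csSup hbdd (ht : t ∈ {k | HasTriOfSize Y k})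
    omega
  omega
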